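/- Let λ > 0. Then there exist constants C > 0 and x₀ > 0 such that for all x ≥ x₀, | x(1 - F_λ(x)) / (2 φ(x) Φ(λx)) - (1 - x^{-2} + 3 x^{-4}) | ≤ C x^{-6}; that is, 1 - F_λ(x) = (2φ(x)Φ(λx)/x) · (1 - x^{-2} + 3x^{-4} + O(x^{-6})) as x → ∞. -/

import Mathlib

open Real MeasureTheory Filter Topology

open Set

/-- Standard normal density. -/
noncomputable def stdPhi (x : ℝ) : ℝ := (Real.sqrt (2 * Real.pi))⁻¹ * Real.exp (-(x ^ 2) / 2)

/-- Standard normal cdf. -/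
noncomputable def stdCdf (x : ℝ) : ℝ := ∫ t in Set.Iic x, stdPhi t

/-- Skew normal density with shape parameter l. -/
noncomputable def snPdf (l x : ℝ) : ℝ := 2 * stdPhi x * stdCdf (l * x)

/-- Skew normal cdf with shape parameter l. -/
noncomputable def snCdf (l x : ℝ) : ℝ := ∫ t in Set.Iic x, snPdf l t

/-- Gumbel extreme value distribution function. -/
noncomputable def gumbel (x : ℝ) : ℝ := Real.exp (-Real.exp (-x))

lemma stdPhi_pos (x : ℝ) : 0 < stdPhi x := by
  apply mul_pos (inv_pos.2 (Real.sqrt_pos.2 (by positivity))) (Real.exp_pos _)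

lemma stdPhi_even (x : ℝ) : stdPhi (-x) = stdPhi x := by simp [stdPhi]

lemma stdPhi_cont : Continuous stdPhi := by
  unfold stdPhi; fun_prop

lemma integrable_stdPhi : Integrable stdPhi := by
  have h : Integrable (fun x : ℝ => Real.exp (-(1/2) * x ^ 2)) :=
    integrable_exp_neg_mul_sq (by norm_num)
  have := h.const_mul ((Real.sqrt (2 * Real.pi))⁻¹)
  refine this.congr (Eventually.of_forall fun x => ?_)
  simp only [stdPhi]; congr 1; ring

lemma integral_stdPhi : ∫ x, stdPhi x = 1 := by
  have h : ∫ x : ℝ, Real.exp (-(1/2) * x ^ 2) = Real.sqrt (Real.pi / (1/2)) :=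
    integral_gaussian (1/2)
  have h2 : ∫ x, stdPhi x = (Real.sqrt (2 * Real.pi))⁻¹ * ∫ x : ℝ, Real.exp (-(1/2) * x ^ 2) := by
    rw [← integral_const_mul]
    congr 1 with x
    simp only [stdPhi]; congr 1; ring
  rw [h2, h]
  rw [show Real.pi / (1/2) = 2 * Real.pi by ring]
  rw [inv_mul_cancel₀ (by positivity)]

lemma hasDerivAt_stdPhi (x : ℝ) : HasDerivAt stdPhi (-x * stdPhi x) x := by
  have h : HasDerivAt (fun x : ℝ => -(x ^ 2) / 2) (-x) x := by
    have := ((hasDerivAt_pow 2 x).neg).div_const 2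
    simpa using this.congr_deriv (by ring)
  have := (h.exp).const_mul ((Real.sqrt (2 * Real.pi))⁻¹)
  refine this.congr_deriv ?_
  simp [stdPhi]; ring

lemma tendsto_stdPhi_atTop : Tendsto stdPhi atTop (𝓝 0) := by
  have h : Tendsto (fun x : ℝ => -(x ^ 2) / 2) atTop atBot := by
    apply Tendsto.atBot_div_const (by norm_num)
    exact tendsto_neg_atBot_iff.2 (tendsto_pow_atTop (two_ne_zero))
  have h2 := (Real.tendsto_exp_atBot).comp h
  have h3 := h2.const_mul ((Real.sqrt (2 * Real.pi))⁻¹)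
  rw [mul_zero] at h3
  exact h3

lemma integrableOn_phi_div (x : ℝ) (hx : 0 < x) (k : ℕ) :
    IntegrableOn (fun t => stdPhi t / t ^ k) (Ioi x) := by
  apply Integrable.mono (g := fun t => stdPhi t * (x ^ k)⁻¹)
    ((integrable_stdPhi.mul_const _).integrableOn)
  · apply ContinuousOn.aestronglyMeasurable _ measurableSet_Ioi
    apply stdPhi_cont.continuousOn.div (continuousOn_pow k)
    intro t ht
    exact pow_ne_zero k (lt_trans hx ht).ne'
  · filter_upwards [ae_restrict_mem measurableSet_Ioi] with t ht
    have htx : x ≤ t := le_of_lt ht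
    have h1 : (0:ℝ) < x ^ k := by positivity
    have h2 : x ^ k ≤ t ^ k := pow_le_pow_left₀ hx.le htx k
    have h3 : 0 < t := lt_trans hx ht
    rw [Real.norm_eq_abs, Real.norm_eq_abs,
      abs_of_nonneg (div_nonneg (stdPhi_pos t).le (by positivity)),
      abs_of_nonneg (mul_nonneg (stdPhi_pos t).le (by positivity))]
    rw [div_eq_mul_inv]
    exact mul_le_mul_of_nonneg_left (by gcongr) (stdPhi_pos t).le

lemma ibp_step (x : ℝ) (hx : 0 < x) (n : ℕ) :
    ∫ t in Ioi x, (stdPhi t / t ^ n + (n + 1) * (stdPhi t / t ^ (n + 2)))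
      = stdPhi x / x ^ (n + 1) := by
  have hderiv : ∀ t ∈ Ioi x, HasDerivAt (fun t => -stdPhi t / t ^ (n + 1))
      (stdPhi t / t ^ n + (n + 1) * (stdPhi t / t ^ (n + 2))) t := by
    intro t ht
    have htpos : 0 < t := lt_trans hx ht
    have h1 : HasDerivAt (fun t => -stdPhi t) (t * stdPhi t) t := by
      exact (hasDerivAt_stdPhi t).neg.congr_deriv (by ring)
    have h2 : HasDerivAt (fun t : ℝ => t ^ (n + 1)) ((n + 1) * t ^ n) t := by
      simpa using hasDerivAt_pow (n + 1) t
    have := h1.div h2 (pow_ne_zero _ htpos.ne')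
    refine this.congr_deriv ?_
    field_simp
    ring
  have hint : IntegrableOn
      (fun t => stdPhi t / t ^ n + (n + 1) * (stdPhi t / t ^ (n + 2))) (Ioi x) := by
    exact (integrableOn_phi_div x hx n).add ((integrableOn_phi_div x hx (n + 2)).const_mul _)
  have hcont : ContinuousWithinAt (fun t => -stdPhi t / t ^ (n + 1)) (Ici x) x := by
    apply ContinuousAt.continuousWithinAt
    exact (stdPhi_cont.neg.continuousAt).div (continuousAt_pow _ _) (pow_ne_zero _ hx.ne')
  have htend : Tendsto (fun t => -stdPhi t / t ^ (n + 1)) atTop (𝓝 0) := by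
    have hneg : Tendsto (fun t => -stdPhi t) atTop (𝓝 0) := by
      simpa using tendsto_stdPhi_atTop.neg
    apply tendsto_of_tendsto_of_tendsto_of_le_of_le' hneg tendsto_stdPhi_atTop
    · filter_upwards [eventually_ge_atTop (1:ℝ)] with t ht
      have ht1 : (1:ℝ) ≤ t ^ (n+1) := one_le_pow₀ ht
      rw [neg_div, neg_le_neg_iff]
      rw [div_le_iff₀ (by positivity)]
      nlinarith [stdPhi_pos t]
    · filter_upwards [eventually_ge_atTop (1:ℝ)] with t ht
      have ht1 : (1:ℝ) ≤ t ^ (n+1) := one_le_pow₀ ht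
      rw [neg_div]
      have : 0 < stdPhi t / t ^ (n+1) := div_pos (stdPhi_pos t) (by positivity)
      linarith [stdPhi_pos t]
  have := integral_Ioi_of_hasDerivAt_of_tendsto hcont hderiv hint htend
  rw [this]
  rw [neg_div, sub_neg_eq_add, zero_add]

noncomputable def tailG (x : ℝ) : ℝ := ∫ t in Ioi x, stdPhi t

lemma tailG_nonneg (x : ℝ) : 0 ≤ tailG x :=
  setIntegral_nonneg measurableSet_Ioi fun t _ => (stdPhi_pos t).le

lemma tailG_aux0 (x : ℝ) (hx : 0 < x) :
    tailG x + ∫ t in Ioi x, stdPhi t / t ^ 2 = stdPhi x / x := by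
  have h := ibp_step x hx 0
  rw [integral_add (integrableOn_phi_div x hx 0)
    ((integrableOn_phi_div x hx 2).const_mul _)] at h
  simpa [tailG] using h

lemma tailG_aux2 (x : ℝ) (hx : 0 < x) :
    (∫ t in Ioi x, stdPhi t / t ^ 2) + 3 * ∫ t in Ioi x, stdPhi t / t ^ 4
      = stdPhi x / x ^ 3 := by
  have h := ibp_step x hx 2
  rw [integral_add (integrableOn_phi_div x hx 2)
    ((integrableOn_phi_div x hx 4).const_mul _)] at h
  rw [integral_const_mul] at h
  norm_num at h
  convert h using 2

lemma tailG_aux4 (x : ℝ) (hx : 0 < x) :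
    (∫ t in Ioi x, stdPhi t / t ^ 4) + 5 * ∫ t in Ioi x, stdPhi t / t ^ 6
      = stdPhi x / x ^ 5 := by
  have h := ibp_step x hx 4
  rw [integral_add (integrableOn_phi_div x hx 4)
    ((integrableOn_phi_div x hx 6).const_mul _)] at h
  rw [integral_const_mul] at h
  norm_num at h
  convert h using 2

lemma tailG_le (x : ℝ) (hx : 0 < x) : tailG x ≤ stdPhi x / x := by
  have h := tailG_aux0 x hx
  have h2 : 0 ≤ ∫ t in Ioi x, stdPhi t / t ^ 2 :=
    setIntegral_nonneg measurableSet_Ioi fun t ht =>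
      div_nonneg (stdPhi_pos t).le (by positivity)
  linarith

lemma tailG_eq (x : ℝ) (hx : 0 < x) :
    tailG x = stdPhi x / x - stdPhi x / x ^ 3 + 3 * (stdPhi x / x ^ 5)
      - 15 * ∫ t in Ioi x, stdPhi t / t ^ 6 := by
  have h0 := tailG_aux0 x hx
  have h2 := tailG_aux2 x hx
  have h4 := tailG_aux4 x hx
  linarith

lemma I6_le (x : ℝ) (hx : 0 < x) :
    (∫ t in Ioi x, stdPhi t / t ^ 6) ≤ (x ^ 6)⁻¹ * (stdPhi x / x) := by
  have h1 : (∫ t in Ioi x, stdPhi t / t ^ 6) ≤ ∫ t in Ioi x, stdPhi t * (x ^ 6)⁻¹ := by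
    apply setIntegral_mono_on (integrableOn_phi_div x hx 6)
      ((integrable_stdPhi.mul_const _).integrableOn) measurableSet_Ioi
    intro t ht
    have htx : x ≤ t := le_of_lt ht
    rw [div_eq_mul_inv]
    apply mul_le_mul_of_nonneg_left _ (stdPhi_pos t).le
    have := pow_le_pow_left₀ hx.le htx 6
    have h6 : (0:ℝ) < x ^ 6 := by positivity
    exact inv_anti₀ h6 this
  have h2 : (∫ t in Ioi x, stdPhi t * (x ^ 6)⁻¹) = (x ^ 6)⁻¹ * tailG x := by
    rw [integral_mul_const]; rw [tailG]; ring
  calc (∫ t in Ioi x, stdPhi t / t ^ 6) ≤ (x ^ 6)⁻¹ * tailG x := by rw [← h2]; exact h1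
    _ ≤ (x ^ 6)⁻¹ * (stdPhi x / x) := by
        apply mul_le_mul_of_nonneg_left (tailG_le x hx) (by positivity)

lemma mill (x : ℝ) (hx : 1 ≤ x) :
    |x * tailG x / stdPhi x - (1 - (x ^ 2)⁻¹ + 3 * (x ^ 4)⁻¹)| ≤ 15 * (x ^ 6)⁻¹ := by
  have hx0 : 0 < x := lt_of_lt_of_le one_pos hx
  have hG := tailG_eq x hx0
  have h6nonneg : 0 ≤ ∫ t in Ioi x, stdPhi t / t ^ 6 :=
    setIntegral_nonneg measurableSet_Ioi fun t ht =>
      div_nonneg (stdPhi_pos t).le (by positivity)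
  have h6le := I6_le x hx0
  have hφ := stdPhi_pos x
  set p := stdPhi x with hp
  set I := ∫ t in Ioi x, stdPhi t / t ^ 6 with hI
  clear_value p I
  have hkey : x * tailG x / p - (1 - (x ^ 2)⁻¹ + 3 * (x ^ 4)⁻¹)
      = -(15 * x * I / p) := by
    rw [hG]
    field_simp
    ring
  rw [hkey, abs_neg,
    abs_of_nonneg (div_nonneg (by positivity) hφ.le)]
  calc 15 * x * I / p ≤ 15 * x * ((x ^ 6)⁻¹ * (p / x)) / p := by gcongr
    _ = 15 * (x ^ 6)⁻¹ := by field_simp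

lemma stdCdf_add_tailG (x : ℝ) : stdCdf x + tailG x = 1 := by
  rw [stdCdf, tailG,
    intervalIntegral.integral_Iic_add_Ioi integrable_stdPhi.integrableOn integrable_stdPhi.integrableOn,
    integral_stdPhi]

lemma stdCdf_nonneg (x : ℝ) : 0 ≤ stdCdf x :=
  setIntegral_nonneg measurableSet_Iic fun t _ => (stdPhi_pos t).le

lemma stdCdf_le_one (x : ℝ) : stdCdf x ≤ 1 := by
  linarith [stdCdf_add_tailG x, tailG_nonneg x]

lemma stdCdf_neg (y : ℝ) : stdCdf (-y) = tailG y := by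
  have h := integral_comp_neg_Iic (-y) stdPhi
  rw [neg_neg] at h
  simp only [stdPhi_even] at h
  rw [stdCdf, tailG, h]

lemma stdCdf_mono : Monotone stdCdf := fun a b hab =>
  setIntegral_mono_set integrable_stdPhi.integrableOn
    (Eventually.of_forall fun t => (stdPhi_pos t).le) (Iic_subset_Iic.2 hab).eventuallyLE


lemma snPdf_nonneg (l t : ℝ) : 0 ≤ snPdf l t :=
  mul_nonneg (mul_nonneg two_pos.le (stdPhi_pos t).le) (stdCdf_nonneg _)

lemma snPdf_le (l t : ℝ) : snPdf l t ≤ 2 * stdPhi t := by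
  rw [snPdf]
  calc 2 * stdPhi t * stdCdf (l * t) ≤ 2 * stdPhi t * 1 :=
        mul_le_mul_of_nonneg_left (stdCdf_le_one _) (mul_nonneg two_pos.le (stdPhi_pos t).le)
    _ = 2 * stdPhi t := mul_one _

lemma aesm_snPdf (l : ℝ) : AEStronglyMeasurable (snPdf l) volume := by
  apply Measurable.aestronglyMeasurable
  exact ((measurable_const.mul stdPhi_cont.measurable).mul
    (stdCdf_mono.measurable.comp (measurable_const.mul measurable_id)))

lemma integrable_snPdf (l : ℝ) : Integrable (snPdf l) := by
  apply Integrable.mono (integrable_stdPhi.const_mul 2) (aesm_snPdf l)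
  filter_upwards with t
  rw [Real.norm_eq_abs, Real.norm_eq_abs, abs_of_nonneg (snPdf_nonneg l t),
    abs_of_nonneg (mul_nonneg two_pos.le (stdPhi_pos t).le)]
  exact snPdf_le l t

lemma integral_snPdf (l : ℝ) : ∫ t, snPdf l t = 1 := by
  have hneg : ∫ t, snPdf l (-t) = ∫ t, snPdf l t := integral_neg_eq_self _ _
  have hintneg : Integrable fun t => snPdf l (-t) := (integrable_snPdf l).comp_neg
  have hsum : ∀ t, snPdf l t + snPdf l (-t) = 2 * stdPhi t := by
    intro t
    rw [snPdf, snPdf, stdPhi_even, show l * -t = -(l * t) by ring, stdCdf_neg]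
    have := stdCdf_add_tailG (l * t)
    nlinarith [stdPhi_pos t]
  have hadd : (∫ t, snPdf l t) + (∫ t, snPdf l (-t)) = ∫ t : ℝ, 2 * stdPhi t := by
    rw [← integral_add (integrable_snPdf l) hintneg]
    exact integral_congr_ae (Eventually.of_forall hsum)
  rw [hneg, integral_const_mul, integral_stdPhi] at hadd
  linarith

lemma snCdf_tail (l x : ℝ) : 1 - snCdf l x = ∫ t in Ioi x, snPdf l t := by
  have := intervalIntegral.integral_Iic_add_Ioi (b := x) (integrable_snPdf l).integrableOn
    (integrable_snPdf l).integrableOn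
  rw [integral_snPdf] at this
  rw [snCdf]
  linarith

lemma tail_lower (l x : ℝ) (hl : 0 < l) (hx : 0 < x) :
    2 * stdCdf (l * x) * tailG x ≤ ∫ t in Ioi x, snPdf l t := by
  have hmono : ∀ t ∈ Ioi x, 2 * stdCdf (l * x) * stdPhi t ≤ snPdf l t := by
    intro t ht
    have htx : x ≤ t := le_of_lt ht
    have h1 : stdCdf (l * x) ≤ stdCdf (l * t) :=
      stdCdf_mono (mul_le_mul_of_nonneg_left htx hl.le)
    rw [snPdf]
    nlinarith [stdPhi_pos t, stdCdf_nonneg (l * x)]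
  calc 2 * stdCdf (l * x) * tailG x = ∫ t in Ioi x, 2 * stdCdf (l * x) * stdPhi t := by
        rw [integral_const_mul, tailG]
    _ ≤ ∫ t in Ioi x, snPdf l t :=
        setIntegral_mono_on ((integrable_stdPhi.const_mul _).integrableOn)
          (integrable_snPdf l).integrableOn measurableSet_Ioi hmono

lemma tail_upper (l x : ℝ) : (∫ t in Ioi x, snPdf l t) ≤ 2 * tailG x := by
  calc (∫ t in Ioi x, snPdf l t) ≤ ∫ t in Ioi x, 2 * stdPhi t :=
        setIntegral_mono_on (integrable_snPdf l).integrableOn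
          ((integrable_stdPhi.const_mul _).integrableOn) measurableSet_Ioi
          (fun t _ => snPdf_le l t)
    _ = 2 * tailG x := by rw [integral_const_mul, tailG]

lemma tendsto_tailG : Tendsto tailG atTop (𝓝 0) := by
  apply tendsto_of_tendsto_of_tendsto_of_le_of_le' tendsto_const_nhds tendsto_stdPhi_atTop
  · exact Eventually.of_forall fun y => tailG_nonneg y
  · filter_upwards [eventually_ge_atTop (1:ℝ)] with y hy
    have hy0 : 0 < y := lt_of_lt_of_le one_pos hy
    calc tailG y ≤ stdPhi y / y := tailG_le y hy0
      _ ≤ stdPhi y / 1 := div_le_div_of_nonneg_left (stdPhi_pos y).le one_pos hy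
      _ = stdPhi y := div_one _

lemma tendsto_err (l : ℝ) (hl : 0 < l) :
    Tendsto (fun x => x ^ 6 * (2 * tailG (l * x))) atTop (𝓝 0) := by
  set b := l ^ 2 / 2 with hb
  have hb0 : 0 < b := by positivity
  have ht : Tendsto (fun x : ℝ => b * x ^ 2) atTop atTop :=
    (tendsto_pow_atTop two_ne_zero).const_mul_atTop hb0
  have h1 : Tendsto (fun x : ℝ => (b * x ^ 2) ^ 3 * Real.exp (-(b * x ^ 2))) atTop (𝓝 0) :=
    (tendsto_pow_mul_exp_neg_atTop_nhds_zero 3).comp ht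
  have hbound : Tendsto (fun x : ℝ =>
      (2 * (Real.sqrt (2 * Real.pi))⁻¹ / b ^ 3) * ((b * x ^ 2) ^ 3 * Real.exp (-(b * x ^ 2))))
      atTop (𝓝 0) := by
    simpa using h1.const_mul _
  apply tendsto_of_tendsto_of_tendsto_of_le_of_le' tendsto_const_nhds hbound
  · filter_upwards with x
    exact mul_nonneg (by positivity) (mul_nonneg two_pos.le (tailG_nonneg _))
  · filter_upwards [eventually_ge_atTop (max 1 (1/l))] with x hx
    have hx1 : (1:ℝ) ≤ x := le_trans (le_max_left _ _) hx
    have hxl : 1 / l ≤ x := le_trans (le_max_right _ _) hx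
    have hlx : 1 ≤ l * x := by
      rw [div_le_iff₀ hl] at hxl; linarith
    have hlx0 : 0 < l * x := lt_of_lt_of_le one_pos hlx
    have htail : tailG (l * x) ≤ stdPhi (l * x) := by
      calc tailG (l * x) ≤ stdPhi (l * x) / (l * x) := tailG_le _ hlx0
        _ ≤ stdPhi (l * x) / 1 :=
            div_le_div_of_nonneg_left (stdPhi_pos _).le one_pos hlx
        _ = stdPhi (l * x) := div_one _
    have hexp : stdPhi (l * x) = (Real.sqrt (2 * Real.pi))⁻¹ * Real.exp (-(b * x ^ 2)) := by
      rw [stdPhi]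
      congr 1
      rw [hb]; ring_nf
    calc x ^ 6 * (2 * tailG (l * x)) ≤ x ^ 6 * (2 * stdPhi (l * x)) := by
          have h2 : (0:ℝ) ≤ x ^ 6 := by positivity
          nlinarith [stdPhi_pos (l * x)]
      _ = 2 * (Real.sqrt (2 * Real.pi))⁻¹ / b ^ 3 * ((b * x ^ 2) ^ 3 * Real.exp (-(b * x ^ 2)))
          := by
          rw [hexp]; field_simp

lemma ev_half (l : ℝ) (hl : 0 < l) : ∀ᶠ x in atTop, 1 / 2 ≤ stdCdf (l * x) := by
  have h2 : Tendsto (fun x : ℝ => l * x) atTop atTop := tendsto_id.const_mul_atTop hl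
  have h3 := tendsto_tailG.comp h2
  have h : Tendsto (fun x => stdCdf (l * x)) atTop (𝓝 1) := by
    have heq : ∀ x : ℝ, stdCdf (l * x) = 1 - tailG (l * x) := fun x => by
      linarith [stdCdf_add_tailG (l * x)]
    simp only [heq]
    simpa using tendsto_const_nhds.sub h3
  exact ((tendsto_order.1 h).1 (1 / 2) (by norm_num)).mono fun x hx => hx.le

theorem skew_normal_tail_expansion_pos (l : ℝ) (hl : 0 < l) :
    ∃ C > (0 : ℝ), ∃ x₀ > (0 : ℝ), ∀ x ≥ x₀,
      |x * (1 - snCdf l x) / (2 * stdPhi x * stdCdf (l * x)) -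
        (1 - (x ^ 2)⁻¹ + 3 * (x ^ 4)⁻¹)| ≤ C * (x ^ 6)⁻¹ := by
  have hev : ∀ᶠ x : ℝ in atTop,
      (1 : ℝ) ≤ x ∧ 1 / 2 ≤ stdCdf (l * x) ∧ x ^ 6 * (2 * tailG (l * x)) ≤ 1 := by
    filter_upwards [eventually_ge_atTop (1 : ℝ), ev_half l hl,
      (tendsto_err l hl).eventually (eventually_le_nhds one_pos)] with x h1 h2 h3
    exact ⟨h1, h2, h3⟩
  obtain ⟨a, ha⟩ := eventually_atTop.1 hev
  refine ⟨16, by norm_num, max a 1, lt_of_lt_of_le one_pos (le_max_right _ _), fun x hx => ?_⟩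
  obtain ⟨hx1, hΦ, hsm⟩ := ha x (le_trans (le_max_left _ _) hx)
  have hx0 : 0 < x := lt_of_lt_of_le one_pos hx1
  have hφ : 0 < stdPhi x := stdPhi_pos x
  have hΦ0 : 0 < stdCdf (l * x) := by linarith
  have hG0 : 0 ≤ tailG x := tailG_nonneg x
  have hU0 : 0 ≤ tailG (l * x) := tailG_nonneg _
  have hΦU : stdCdf (l * x) + tailG (l * x) = 1 := stdCdf_add_tailG _
  have hxG : x * tailG x ≤ stdPhi x := by
    have h := tailG_le x hx0
    rw [le_div_iff₀ hx0] at h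
    linarith
  have hlow : 2 * stdCdf (l * x) * tailG x ≤ 1 - snCdf l x := by
    rw [snCdf_tail]; exact tail_lower l x hl hx0
  have hup : 1 - snCdf l x ≤ 2 * tailG x := by
    rw [snCdf_tail]; exact tail_upper l x
  have hmill := mill x hx1
  set S := 1 - snCdf l x with hS
  set G := tailG x with hGdef
  set p := stdPhi x with hp
  set Φ := stdCdf (l * x) with hΦdef
  set U := tailG (l * x) with hUdef
  have hden : 0 < 2 * p * Φ := mul_pos (mul_pos two_pos hφ) hΦ0
  set M := x * G / p with hM
  have hMp : M * p = x * G := div_mul_cancel₀ _ hφ.ne'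
  have hM1 : M ≤ 1 := by
    rw [hM, div_le_one hφ]; exact hxG
  have hM0 : 0 ≤ M := div_nonneg (mul_nonneg hx0.le hG0) hφ.le
  have hA : M ≤ x * S / (2 * p * Φ) := by
    rw [le_div_iff₀ hden]
    calc M * (2 * p * Φ) = x * (2 * Φ * G) := by rw [show M * (2 * p * Φ) = 2 * Φ * (M * p) by ring, hMp]; ring
      _ ≤ x * S := mul_le_mul_of_nonneg_left hlow hx0.le
  have hB : x * S / (2 * p * Φ) ≤ M + 2 * U := by
    rw [div_le_iff₀ hden]
    have h1 : x * S ≤ 2 * (M * p) := by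
      rw [hMp]
      nlinarith [mul_le_mul_of_nonneg_left hup hx0.le]
    have h2 : 0 ≤ p * U * (2 * Φ - M) :=
      mul_nonneg (mul_nonneg hφ.le hU0) (by linarith)
    nlinarith
  have habs : |x * S / (2 * p * Φ) - M| ≤ 2 * U := by
    rw [abs_le]
    constructor <;> [linarith; linarith]
  have hU6 : 2 * U ≤ (x ^ 6)⁻¹ := by
    have hx6 : (0 : ℝ) < x ^ 6 := by positivity
    rw [← one_div, le_div_iff₀ hx6]
    nlinarith
  calc |x * S / (2 * p * Φ) - (1 - (x ^ 2)⁻¹ + 3 * (x ^ 4)⁻¹)|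
      ≤ |x * S / (2 * p * Φ) - M| + |M - (1 - (x ^ 2)⁻¹ + 3 * (x ^ 4)⁻¹)| :=
        abs_sub_le _ _ _
    _ ≤ 2 * U + 15 * (x ^ 6)⁻¹ := by
        apply add_le_add habs
        simpa [hM] using hmill
    _ ≤ 16 * (x ^ 6)⁻¹ := by linarith
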